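/- For any commutative ring A, the Krull dimension of W_n(A) (p-typical Witt vectors) equals the Krull dimension of A. -/

import Mathlib

set_option maxHeartbeats 1000000

open WittVector TruncatedWittVector

namespace WittKrull

variable (p : ℕ) [Fact p.Prime] (n : ℕ) (A : Type) [CommRing A]

local notation "𝕎" => WittVector p

variable {p n A}

/-- ghost components up to `n` only depend on the truncation. -/
lemma ghost_eq_of_truncate_eq {x y : 𝕎 A}
    (h : WittVector.truncate (n + 1) x = WittVector.truncate (n + 1) y)
    {i : ℕ} (hi : i ≤ n) :
    WittVector.ghostComponent i x = WittVector.ghostComponent i y := by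
  have hcoeff : ∀ j : ℕ, j ≤ n → x.coeff j = y.coeff j := by
    intro j hj
    have := congrArg (TruncatedWittVector.coeff (⟨j, by omega⟩ : Fin (n + 1))) h
    simpa [WittVector.coeff_truncate] using this
  rw [ghostComponent_apply, ghostComponent_apply, aeval_wittPolynomial, aeval_wittPolynomial]
  refine Finset.sum_congr rfl fun j hj => ?_
  rw [Finset.mem_range] at hj
  rw [hcoeff j (by omega)]

lemma truncate_out' (x : TruncatedWittVector p (n + 1) A) :
    WittVector.truncate (n + 1) x.out = x :=
  truncateFun_out x

/-- The underlying function of the total ghost map on truncated Witt vectors. -/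
noncomputable def tghostFun (x : TruncatedWittVector p (n + 1) A) : Fin (n + 1) → A :=
  fun i => WittVector.ghostComponent (i : ℕ) x.out

lemma tghostFun_truncate (z : 𝕎 A) (i : Fin (n + 1)) :
    tghostFun (WittVector.truncate (n + 1) z) i = WittVector.ghostComponent (i : ℕ) z := by
  exact ghost_eq_of_truncate_eq (by rw [truncate_out']) (Nat.le_of_lt_succ i.isLt)

variable (p n A)

/-- The total ghost map on truncated Witt vectors. -/
noncomputable def tghost :
    TruncatedWittVector p (n + 1) A →+* (Fin (n + 1) → A) where
  toFun := tghostFun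
  map_one' := by
    funext i
    show tghostFun 1 i = _
    have := tghostFun_truncate (1 : 𝕎 A) i
    rw [map_one] at this
    rw [this, map_one, Pi.one_apply]
  map_zero' := by
    funext i
    show tghostFun 0 i = _
    have := tghostFun_truncate (0 : 𝕎 A) i
    rw [map_zero] at this
    rw [this, map_zero, Pi.zero_apply]
  map_mul' x y := by
    obtain ⟨a, rfl⟩ := WittVector.truncate_surjective p (n + 1) A x
    obtain ⟨b, rfl⟩ := WittVector.truncate_surjective p (n + 1) A y
    funext i
    rw [Pi.mul_apply]
    rw [← map_mul, tghostFun_truncate, tghostFun_truncate, tghostFun_truncate,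
      map_mul]
  map_add' x y := by
    obtain ⟨a, rfl⟩ := WittVector.truncate_surjective p (n + 1) A x
    obtain ⟨b, rfl⟩ := WittVector.truncate_surjective p (n + 1) A y
    funext i
    rw [Pi.add_apply]
    rw [← map_add, tghostFun_truncate, tghostFun_truncate, tghostFun_truncate,
      map_add]

variable {p n A}

lemma tghost_apply (x : TruncatedWittVector p (n + 1) A) (i : Fin (n + 1)) :
    tghost p n A x i = WittVector.ghostComponent (i : ℕ) x.out := rfl

lemma tghost_truncate (z : 𝕎 A) (i : Fin (n + 1)) :
    tghost p n A (WittVector.truncate (n + 1) z) i = WittVector.ghostComponent (i : ℕ) z :=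
  tghostFun_truncate z i
lemma coeff_zero_eq_ghostComponent_zero (x : 𝕎 A) :
    x.coeff 0 = WittVector.ghostComponent 0 x := by
  rw [ghostComponent_apply, aeval_wittPolynomial]
  simp

lemma iterate_verschiebung_coeff_eq_zero (u : 𝕎 A) {m i : ℕ} (hi : i < m) :
    ((WittVector.verschiebung)^[m] u).coeff i = 0 := by
  induction m generalizing i with
  | zero => omega
  | succ m ih =>
    rw [Function.iterate_succ_apply']
    rcases i with _ | i
    · exact WittVector.verschiebung_coeff_zero _
    · rw [WittVector.verschiebung_coeff_succ]
      exact ih (by omega)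

lemma eq_iterate_verschiebung {z : 𝕎 A} {m : ℕ} (hz : ∀ i < m, z.coeff i = 0) :
    z = (WittVector.verschiebung)^[m] (WittVector.mk p fun j => z.coeff (j + m)) := by
  ext i
  rcases lt_or_ge i m with hi | hi
  · rw [iterate_verschiebung_coeff_eq_zero _ hi, hz i hi]
  · obtain ⟨j, rfl⟩ : ∃ j, i = j + m := ⟨i - m, by omega⟩
    rw [WittVector.iterate_verschiebung_coeff]
    rfl

lemma ghostComponent_iterate_frobenius (x : 𝕎 A) (m i : ℕ) :
    WittVector.ghostComponent i ((WittVector.frobenius)^[m] x)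
      = WittVector.ghostComponent (i + m) x := by
  induction m generalizing i with
  | zero => simp
  | succ m ih =>
    rw [show i + (m + 1) = i + 1 + m by omega, Function.iterate_succ_apply',
      WittVector.ghostComponent_frobenius, ih]

/-- Main nilpotency computation: if the first `n+1` ghost components of `x` vanish,
then `x ^ (k+1)` has vanishing coefficients up to `k`, for each `k ≤ n`. -/
lemma coeff_pow_eq_zero {x : 𝕎 A} (hx : ∀ i ≤ n, WittVector.ghostComponent i x = 0) :
    ∀ k, k ≤ n → ∀ i ≤ k, (x ^ (k + 1)).coeff i = 0 := by
  intro k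
  induction k with
  | zero =>
    intro _ i hi
    interval_cases i
    rw [pow_one, coeff_zero_eq_ghostComponent_zero]
    exact hx 0 (by omega)
  | succ k ih =>
    intro hk i hi
    have hz : ∀ i < k + 1, (x ^ (k + 1)).coeff i = 0 := by
      intro i hi
      exact ih (by omega) i (by omega)
    set w : 𝕎 A := WittVector.mk p fun j => (x ^ (k + 1)).coeff (j + (k + 1)) with hw
    have hrepr : x ^ (k + 1) = (WittVector.verschiebung)^[k + 1] w := eq_iterate_verschiebung hz
    have hthis : x ^ (k + 1 + 1) = (WittVector.verschiebung)^[k + 1]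
        (w * (WittVector.frobenius)^[k + 1] x) := by
      calc x ^ (k + 1 + 1) = x ^ (k + 1) * x := by rw [pow_succ]
        _ = (WittVector.verschiebung)^[k + 1] w * x := by rw [← hrepr]
        _ = _ := WittVector.iterate_verschiebung_mul_left _ _ _
    rw [hthis]
    rcases lt_or_ge i (k + 1) with hik | hik
    · exact iterate_verschiebung_coeff_eq_zero _ hik
    · have hik' : i = k + 1 := by omega
      subst hik'
      have h2 := WittVector.iterate_verschiebung_coeff
        (w * (WittVector.frobenius)^[k + 1] x) (k + 1) 0
      rw [zero_add] at h2
      rw [h2, WittVector.mul_coeff_zero,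
        coeff_zero_eq_ghostComponent_zero ((WittVector.frobenius)^[k + 1] x),
        ghostComponent_iterate_frobenius, zero_add, hx (k + 1) hk, mul_zero]

/-- Every element of the kernel of the ghost map on full Witt vectors is "nilpotent
up to truncation": `x ^ (n+1)` has vanishing coefficients below `n+1`. -/
lemma tghost_ker_nilpotent (x : TruncatedWittVector p (n + 1) A)
    (hx : tghost p n A x = 0) : x ^ (n + 1) = 0 := by
  set y : 𝕎 A := x.out with hy
  have hg : ∀ i ≤ n, WittVector.ghostComponent i y = 0 := by
    intro i hi
    have := congrFun hx (⟨i, by omega⟩ : Fin (n + 1))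
    rw [tghost_apply] at this
    simpa using this
  have hcoeff := coeff_pow_eq_zero hg n le_rfl
  have htr : WittVector.truncate (n + 1) (y ^ (n + 1)) = x ^ (n + 1) := by
    rw [map_pow, truncate_out']
  rw [← htr]
  have : y ^ (n + 1) ∈ RingHom.ker (WittVector.truncate (p := p) (R := A) (n + 1)) := by
    rw [WittVector.mem_ker_truncate]
    intro i hi
    exact hcoeff i (by omega)
  exact this


/-! ### Integrality of the ghost map -/

lemma single_idempotent_isIntegral {W : Type*} [CommRing W] {S : Type*} [CommRing S]
    [Algebra W S] {e : S} (he : e * e = e) : IsIntegral W e := by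
  refine ⟨Polynomial.X ^ 2 - Polynomial.X, Polynomial.monic_X_pow_sub ?_, ?_⟩
  · exact lt_of_le_of_lt Polynomial.degree_X_le (by norm_num)
  · simp only [Polynomial.eval₂_sub, Polynomial.eval₂_pow, Polynomial.eval₂_X]
    rw [sq, he, sub_self]

lemma tghost_isIntegral :
    letI : Algebra (TruncatedWittVector p (n + 1) A) (Fin (n + 1) → A) :=
      (tghost p n A).toAlgebra
    Algebra.IsIntegral (TruncatedWittVector p (n + 1) A) (Fin (n + 1) → A) := by
  letI : Algebra (TruncatedWittVector p (n + 1) A) (Fin (n + 1) → A) :=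
    (tghost p n A).toAlgebra
  have halg : algebraMap (TruncatedWittVector p (n + 1) A) (Fin (n + 1) → A) = tghost p n A :=
    rfl
  rw [Algebra.isIntegral_def]
  have hsingle : ∀ (i : Fin (n + 1)) (a : A),
      IsIntegral (TruncatedWittVector p (n + 1) A)
        (Pi.single i a : Fin (n + 1) → A) := by
    intro i a
    have hppos : 0 < p ^ (i : ℕ) := pow_pos (Fact.out (p := p.Prime)).pos _
    have he : IsIntegral (TruncatedWittVector p (n + 1) A)
        (Pi.single i (1 : A) : Fin (n + 1) → A) := by
      refine single_idempotent_isIntegral ?_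
      funext j
      by_cases h : j = i <;> simp [Pi.single_apply, h]
    have hw : IsIntegral (TruncatedWittVector p (n + 1) A)
        (Pi.single i (a ^ p ^ (i : ℕ)) : Fin (n + 1) → A) := by
      have hrepr : (Pi.single i (a ^ p ^ (i : ℕ)) : Fin (n + 1) → A) =
          (tghost p n A (WittVector.truncate (n + 1) (WittVector.teichmuller p a)))
            * (Pi.single i (1 : A) : Fin (n + 1) → A) := by
        funext j
        by_cases h : j = i
        · subst h
          rw [Pi.mul_apply, tghost_truncate, WittVector.ghostComponent_teichmuller]
          simp [Pi.single_apply]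
        · simp [Pi.single_apply, h]
      rw [hrepr, ← halg]
      exact (isIntegral_algebraMap).mul he
    have hpow : (Pi.single i a : Fin (n + 1) → A) ^ (p ^ (i : ℕ))
        = (Pi.single i (a ^ p ^ (i : ℕ)) : Fin (n + 1) → A) := by
      funext j
      by_cases h : j = i
      · subst h; simp [Pi.single_apply]
      · simp [Pi.single_apply, h, zero_pow hppos.ne']
    exact IsIntegral.of_pow hppos (hpow ▸ hw)
  intro x
  have hx : x = ∑ i, Pi.single i (x i) := (Finset.univ_sum_single x).symm
  rw [hx]
  exact IsIntegral.sum _ fun i _ => hsingle i (x i)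

/-! ### Primes of finite products -/

section Pi

variable {ι : Type} [Fintype ι] [DecidableEq ι] {B : Type} [CommRing B]

lemma pi_prime_exists_index (P : Ideal (ι → B)) (hP : P.IsPrime) :
    ∃ i : ι, ∀ x : ι → B, x ∈ P ↔ (fun _ => x i) ∈ P := by
  have h1 : (1 : ι → B) ∉ P := (Ideal.ne_top_iff_one P).mp hP.ne_top
  have hsum : ∑ i : ι, Pi.single i (1 : B) = (1 : ι → B) := by
    simpa using Finset.univ_sum_single (1 : ι → B)
  have hex : ∃ i : ι, Pi.single i (1 : B) ∉ P := by
    by_contra h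
    push_neg at h
    exact h1 (hsum ▸ Ideal.sum_mem P fun i _ => h i)
  obtain ⟨i, hi⟩ := hex
  refine ⟨i, fun x => ?_⟩
  have key : (x - fun _ => x i) * Pi.single i 1 = 0 := by
    funext j
    by_cases h : j = i <;> simp [h, Pi.single_apply]
  have hmem : (x - fun _ => x i) ∈ P := by
    have h0 : (x - fun _ => x i) * Pi.single i 1 ∈ P := by rw [key]; exact P.zero_mem
    rcases hP.mem_or_mem h0 with h | h
    · exact h
    · exact absurd h hi
  constructor
  · intro hx
    simpa using P.sub_mem hx hmem
  · intro hc
    simpa using P.add_mem hmem hc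

lemma pi_comap_const_lt {P Q : Ideal (ι → B)} (hP : P.IsPrime) (hQ : Q.IsPrime) (h : P < Q) :
    Ideal.comap (Pi.constRingHom ι B) P < Ideal.comap (Pi.constRingHom ι B) Q := by
  obtain ⟨i, hi⟩ := pi_prime_exists_index P hP
  obtain ⟨i', hi'⟩ := pi_prime_exists_index Q hQ
  have hii : i = i' := by
    by_contra hne
    have h1 : Pi.single i' (1 : B) ∈ P := by
      rw [hi]
      have : (fun _ : ι => (Pi.single i' (1 : B) : ι → B) i) = (0 : ι → B) := by
        funext j; simp [Pi.single_apply, Ne.symm hne]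
      rw [this]
      exact P.zero_mem
    have h2 : Pi.single i' (1 : B) ∉ Q := by
      intro hmem
      rw [hi'] at hmem
      have : (fun _ : ι => (Pi.single i' (1 : B) : ι → B) i') = (1 : ι → B) := by
        funext j; simp [Pi.single_apply]
      rw [this] at hmem
      exact (Ideal.ne_top_iff_one Q).mp hQ.ne_top hmem
    exact h2 (h.le h1)
  subst hii
  refine lt_of_le_of_ne (Ideal.comap_mono h.le) fun heq => h.ne ?_
  ext x
  rw [hi, hi']
  have hmemP : (fun _ : ι => x i) ∈ P ↔ x i ∈ Ideal.comap (Pi.constRingHom ι B) P :=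
    Iff.rfl
  have hmemQ : (fun _ : ι => x i) ∈ Q ↔ x i ∈ Ideal.comap (Pi.constRingHom ι B) Q :=
    Iff.rfl
  rw [hmemP, hmemQ, heq]

end Pi

/-! ### Chain lifting along integral maps surjective on spectra -/

lemma exists_lift_chain (W S : Type) [CommRing W] [CommRing S] [Algebra W S]
    [Algebra.IsIntegral W S] (hker : RingHom.ker (algebraMap W S) ≤ nilradical W)
    (c : LTSeries (PrimeSpectrum W)) :
    ∃ d : LTSeries (PrimeSpectrum S),
      d.length = c.length ∧ Ideal.comap (algebraMap W S) d.last.asIdeal = c.last.asIdeal := by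
  obtain ⟨k, hn⟩ : ∃ k, c.length = k := ⟨_, rfl⟩
  induction k generalizing c with
  | zero =>
    haveI := c.last.isPrime
    obtain ⟨Q, -, hQprime, hQcomap⟩ :=
      Ideal.exists_ideal_over_prime_of_isIntegral c.last.asIdeal (⊥ : Ideal S) (by
        rw [← RingHom.ker_eq_comap_bot]
        exact hker.trans (nilradical_le_prime _))
    exact ⟨RelSeries.singleton _ ⟨Q, hQprime⟩, by simpa using hn.symm, hQcomap⟩
  | succ k ih =>
    have hne : c.eraseLast.length = k := by
      rw [RelSeries.eraseLast_length, hn]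
      omega
    obtain ⟨d', hd'len, hd'last⟩ := ih c.eraseLast hne
    haveI := c.last.isPrime
    have hstep : c.eraseLast.last < c.last :=
      c.eraseLast_last_rel_last (by omega)
    obtain ⟨Q, hQge, hQprime, hQcomap⟩ :=
      Ideal.exists_ideal_over_prime_of_isIntegral c.last.asIdeal d'.last.asIdeal (by
        rw [hd'last]; exact hstep.le)
    have hlt : d'.last < (⟨Q, hQprime⟩ : PrimeSpectrum S) := by
      refine lt_of_le_of_ne hQge fun hEq => hstep.ne ?_
      apply PrimeSpectrum.ext
      rw [← hd'last, ← hQcomap, hEq]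
    refine ⟨d'.snoc ⟨Q, hQprime⟩ hlt, ?_, ?_⟩
    · rw [RelSeries.snoc_length, hd'len, hne, hn]
    · rw [RelSeries.last_snoc]
      exact hQcomap

end WittKrull

/-- For any commutative ring `A`, the Krull dimension of `W_n(A)`
(`p`-typical Witt vectors, normalized indexing: `W_n = TruncatedWittVector p (n+1)`)
equals the Krull dimension of `A`. -/
theorem witt_krull_dimension (p : ℕ) [Fact p.Prime] (n : ℕ) (A : Type) [CommRing A] :
    ringKrullDim (TruncatedWittVector p (n + 1) A) = ringKrullDim A := by
  classical
  set W := TruncatedWittVector p (n + 1) A with hW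
  letI : Algebra W (Fin (n + 1) → A) := (WittKrull.tghost p n A).toAlgebra
  have halg : algebraMap W (Fin (n + 1) → A) = WittKrull.tghost p n A := rfl
  haveI hInt : Algebra.IsIntegral W (Fin (n + 1) → A) := WittKrull.tghost_isIntegral
  have hker : RingHom.ker (algebraMap W (Fin (n + 1) → A)) ≤ nilradical W := by
    intro x hx
    rw [mem_nilradical]
    refine ⟨n + 1, WittKrull.tghost_ker_nilpotent x ?_⟩
    rw [← halg]
    exact hx
  apply le_antisymm
  · -- dim W ≤ dim A, by lifting chains to `Fin (n+1) → A` and projecting to `A`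
    show Order.krullDim (PrimeSpectrum W) ≤ Order.krullDim (PrimeSpectrum A)
    rw [Order.krullDim, Order.krullDim]
    refine iSup_le fun c => ?_
    obtain ⟨d, hdlen, -⟩ :=
      WittKrull.exists_lift_chain W (Fin (n + 1) → A) hker c
    let π : PrimeSpectrum (Fin (n + 1) → A) → PrimeSpectrum A := fun P =>
      ⟨Ideal.comap (Pi.constRingHom (Fin (n + 1)) A) P.asIdeal,
        Ideal.IsPrime.comap _ (hK := P.isPrime)⟩
    let d' : LTSeries (PrimeSpectrum A) :=
      ⟨d.length, fun j => π (d j), fun j => by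
        exact WittKrull.pi_comap_const_lt (d j.castSucc).isPrime (d j.succ).isPrime
          (d.step j)⟩
    have : (c.length : WithBot ℕ∞) = d'.length := by
      simp [d', hdlen]
    rw [this]
    exact Order.LTSeries.length_le_krullDim d'
  · -- dim A ≤ dim W via the strictly monotone map on spectra
    show Order.krullDim (PrimeSpectrum A) ≤ Order.krullDim (PrimeSpectrum W)
    refine Order.krullDim_le_of_strictMono (fun q =>
      ⟨Ideal.comap (algebraMap W (Fin (n + 1) → A))
        (Ideal.comap (Pi.evalRingHom (fun _ : Fin (n + 1) => A) 0) q.asIdeal),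
        Ideal.IsPrime.comap _ (hK := Ideal.IsPrime.comap _ (hK := q.isPrime))⟩)
      (fun q q' hqq => ?_)
    haveI := q.isPrime
    haveI := q'.isPrime
    haveI : (Ideal.comap (Pi.evalRingHom (fun _ : Fin (n + 1) => A) 0) q.asIdeal).IsPrime :=
      Ideal.IsPrime.comap _
    obtain ⟨a, haq', haq⟩ := SetLike.exists_of_lt (show q.asIdeal < q'.asIdeal from hqq)
    have hIJ : Ideal.comap (Pi.evalRingHom (fun _ : Fin (n + 1) => A) 0) q.asIdeal ≤
        Ideal.comap (Pi.evalRingHom (fun _ : Fin (n + 1) => A) 0) q'.asIdeal :=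
      Ideal.comap_mono hqq.le
    have hmem : (fun _ : Fin (n + 1) => a) ∈
        (Ideal.comap (Pi.evalRingHom (fun _ : Fin (n + 1) => A) 0) q'.asIdeal : Set _) \
        (Ideal.comap (Pi.evalRingHom (fun _ : Fin (n + 1) => A) 0) q.asIdeal : Set _) := by
      constructor
      · show (fun _ : Fin (n + 1) => a) 0 ∈ q'.asIdeal
        exact haq'
      · show ¬ ((fun _ : Fin (n + 1) => a) 0 ∈ q.asIdeal)
        exact haq
    exact Ideal.comap_lt_comap_of_integral_mem_sdiff hIJ hmem
      (Algebra.IsIntegral.isIntegral _)
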